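/- arXiv:2004.05163 — 4 statements merged into one kernel-verified Lean document; each statement's English description precedes it below -/
import Mathlib

section
/- Let F : ℝ → ℝ be differentiable with f = F′, and suppose f is differentiable with |f′(x)| ≤ L for all x ∈ ℝ. Then for all real numbers a, b, c, setting m = (3b − c)/2, one has F(a) − F(b) − f(m)(a − b) ≤ (L/4)((a − b)² + (a − 2b + c)²) + (L/4)(b − c)². -/
private lemma taylor_aux (F f : ℝ → ℝ) (L m : ℝ)
    (hF : ∀ x, HasDerivAt F (f x) x)
    (hlip : ∀ x y : ℝ, |f x - f y| ≤ L * |x - y|) (x : ℝ) :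
    F x - F m - f m * (x - m) ≤ L / 2 * (x - m) ^ 2 := by
  set u : ℝ → ℝ := fun t => F t - f m * t - L / 2 * (t - m) ^ 2 with hu_def
  have hu : ∀ t : ℝ, HasDerivAt u (f t - f m - L * (t - m)) t := by
    intro t
    have h1 : HasDerivAt (fun t : ℝ => f m * t) (f m) t := by
      simpa using (hasDerivAt_id t).const_mul (f m)
    have h2 : HasDerivAt (fun t : ℝ => L / 2 * (t - m) ^ 2) (L * (t - m)) t := by
      have h3 : HasDerivAt (fun t : ℝ => (t - m) ^ 2) (2 * (t - m) ^ 1 * 1) t :=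
        ((hasDerivAt_id t).sub_const m).pow 2
      have := h3.const_mul (L / 2)
      exact this.congr_deriv (by ring)
    exact ((hF t).sub h1).sub h2
  have key : u x ≤ u m := by
    rcases le_total x m with hx | hx
    · -- monotone on Iic m
      have mono : MonotoneOn u (Set.Iic m) := by
        apply monotoneOn_of_deriv_nonneg (convex_Iic m)
        · exact fun t _ => ((hu t).continuousAt).continuousWithinAt
        · exact fun t _ => ((hu t).differentiableAt).differentiableWithinAt
        · intro t ht
          rw [(hu t).deriv]
          rw [interior_Iic] at ht
          have := hlip m t
          rw [abs_of_nonneg (by linarith [ht.out] : (0:ℝ) ≤ m - t)] at this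
          have h4 := abs_le.mp this
          nlinarith [h4.1, h4.2]
      exact mono (Set.mem_Iic.mpr hx) (Set.mem_Iic.mpr le_rfl) hx
    · -- antitone on Ici m
      have anti : AntitoneOn u (Set.Ici m) := by
        apply antitoneOn_of_deriv_nonpos (convex_Ici m)
        · exact fun t _ => ((hu t).continuousAt).continuousWithinAt
        · exact fun t _ => ((hu t).differentiableAt).differentiableWithinAt
        · intro t ht
          rw [(hu t).deriv]
          rw [interior_Ici] at ht
          have := hlip t m
          rw [abs_of_nonneg (by linarith [ht.out] : (0:ℝ) ≤ t - m)] at this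
          have h4 := abs_le.mp this
          nlinarith [h4.1, h4.2]
      exact anti (Set.mem_Ici.mpr le_rfl) (Set.mem_Ici.mpr hx) hx
  simp only [hu_def] at key
  nlinarith [key]

theorem stmt_3 (F f : ℝ → ℝ) (L : ℝ)
    (hF : ∀ x, HasDerivAt F (f x) x)
    (hf : Differentiable ℝ f)
    (hL : ∀ x, |deriv f x| ≤ L)
    (a b c : ℝ) :
    F a - F b - f ((3 * b - c) / 2) * (a - b) ≤
      (L / 4) * ((a - b) ^ 2 + (a - 2 * b + c) ^ 2) + (L / 4) * (b - c) ^ 2 := by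
  have hL0 : 0 ≤ L := le_trans (abs_nonneg _) (hL 0)
  have hlip : ∀ x y : ℝ, |f x - f y| ≤ L * |x - y| := by
    intro x y
    have := Convex.norm_image_sub_le_of_norm_deriv_le
      (f := f) (C := L) (fun t _ => (hf t)) (fun t _ => by simpa using hL t)
      convex_univ (Set.mem_univ y) (Set.mem_univ x)
    simpa [Real.norm_eq_abs] using this
  have hlip' : ∀ x y : ℝ, |(fun t => -f t) x - (fun t => -f t) y| ≤ L * |x - y| := by
    intro x y
    have := hlip x y
    simp only
    rwa [show -f x - -f y = -(f x - f y) by ring, abs_neg]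
  have hA := taylor_aux F f L ((3 * b - c) / 2) hF hlip a
  have hB := taylor_aux (fun t => -F t) (fun t => -f t) L ((3 * b - c) / 2)
    (fun x => (hF x).neg) hlip' b
  nlinarith [hA, hB, mul_nonneg hL0 (sq_nonneg (b - c))]
end

section
/- Let g : ℝ → ℝ be twice continuously differentiable, let t ∈ ℝ and τ > 0. Then |g(t + τ) − 2g(t) + g(t − τ)|² ≤ (2τ³/3) ∫_{t−τ}^{t+τ} |g″(s)|² ds. -/
open MeasureTheory Set intervalIntegral

theorem stmt_8 (g : ℝ → ℝ) (hg : ContDiff ℝ 2 g) (t τ : ℝ) (hτ : 0 < τ) :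
    |g (t + τ) - 2 * g t + g (t - τ)| ^ 2 ≤
      (2 * τ ^ 3 / 3) * ∫ s in (t - τ)..(t + τ), |deriv (deriv g) s| ^ 2 := by
  set f := deriv g with hf
  set F := deriv (deriv g) with hFdef
  -- regularity facts
  have h1 : ContDiff ℝ ((1:ℕ∞)+1) g := by exact_mod_cast hg
  have h2 := contDiff_succ_iff_deriv.mp h1
  have h1' : ContDiff ℝ ((0:ℕ∞)+1) (deriv g) := by exact_mod_cast h2.2.2
  have h3 := contDiff_succ_iff_deriv.mp h1'
  have hgd : ∀ x, HasDerivAt g (f x) x := fun x => (h2.1 x).hasDerivAt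
  have hfd : ∀ x, HasDerivAt f (F x) x := fun x => (h3.1 x).hasDerivAt
  have hFc : Continuous F := h3.2.2.continuous
  have hfc : Continuous f := h3.1.continuous
  have hab : t - τ ≤ t + τ := by linarith
  set k : ℝ → ℝ := fun s => τ - |s - t| with hk
  have hkc : Continuous k := by
    exact continuous_const.sub ((continuous_id.sub continuous_const).abs)
  -- integration by parts on [t, t+τ]
  have hA : ∫ s in t..(t+τ), (t + τ - s) * F s = g (t+τ) - g t - τ * f t := by
    have hu : ∀ x ∈ uIcc t (t+τ), HasDerivAt (fun s => t + τ - s) (-1 : ℝ) x :=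
      fun x _ => (hasDerivAt_id x).const_sub (t+τ)
    have hv : ∀ x ∈ uIcc t (t+τ), HasDerivAt f (F x) x := fun x _ => hfd x
    have h := intervalIntegral.integral_mul_deriv_eq_deriv_mul hu hv
      (continuous_const.intervalIntegrable _ _) (hFc.intervalIntegrable _ _)
    have hfint : ∫ s in t..(t+τ), f s = g (t+τ) - g t :=
      intervalIntegral.integral_eq_sub_of_hasDerivAt (fun x _ => hgd x)
        (hfc.intervalIntegrable _ _)
    rw [h]
    simp only [neg_one_mul, intervalIntegral.integral_neg, hfint]
    ring
  -- integration by parts on [t-τ, t]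
  have hB : ∫ s in (t-τ)..t, (s - (t - τ)) * F s = τ * f t - (g t - g (t-τ)) := by
    have hu : ∀ x ∈ uIcc (t-τ) t, HasDerivAt (fun s => s - (t - τ)) (1 : ℝ) x :=
      fun x _ => (hasDerivAt_id x).sub_const (t-τ)
    have hv : ∀ x ∈ uIcc (t-τ) t, HasDerivAt f (F x) x := fun x _ => hfd x
    have h := intervalIntegral.integral_mul_deriv_eq_deriv_mul hu hv
      (continuous_const.intervalIntegrable _ _) (hFc.intervalIntegrable _ _)
    have hfint : ∫ s in (t-τ)..t, f s = g t - g (t-τ) :=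
      intervalIntegral.integral_eq_sub_of_hasDerivAt (fun x _ => hgd x)
        (hfc.intervalIntegrable _ _)
    rw [h]
    simp only [one_mul, hfint]
    ring
  -- kernel equalities on the two halves
  have e1 : ∫ s in (t-τ)..t, k s * F s = ∫ s in (t-τ)..t, (s - (t - τ)) * F s := by
    apply intervalIntegral.integral_congr
    intro s hs
    rw [uIcc_of_le (by linarith)] at hs
    have : |s - t| = t - s := by rw [abs_of_nonpos (by linarith [hs.2] : s - t ≤ 0)]; ring
    simp only [hk, this]
    ring_nf
  have e2 : ∫ s in t..(t+τ), k s * F s = ∫ s in t..(t+τ), (t + τ - s) * F s := by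
    apply intervalIntegral.integral_congr
    intro s hs
    rw [uIcc_of_le (by linarith)] at hs
    have : |s - t| = s - t := abs_of_nonneg (by linarith [hs.1])
    simp only [hk, this]
    ring_nf
  have hadd := intervalIntegral.integral_add_adjacent_intervals
    (μ := volume) (a := t-τ) (b := t) (c := t+τ) (f := fun s => k s * F s)
    ((hkc.mul hFc).intervalIntegrable _ _) ((hkc.mul hFc).intervalIntegrable _ _)
  have hrep : ∫ s in (t-τ)..(t+τ), k s * F s = g (t+τ) - 2 * g t + g (t-τ) := by
    rw [← hadd, e1, e2, hA, hB]; ring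
  -- value of ∫ k²
  have c1 : ∫ s in t..(t+τ), (k s)^2 = τ^3/3 := by
    have h' : ∫ s in t..(t+τ), (k s)^2 = ∫ s in t..(t+τ), ((fun x : ℝ => x^2) ((t+τ) - s)) := by
      apply intervalIntegral.integral_congr
      intro s hs
      rw [uIcc_of_le (by linarith)] at hs
      have : |s - t| = s - t := abs_of_nonneg (by linarith [hs.1])
      simp only [hk, this]
      ring_nf
    rw [h', intervalIntegral.integral_comp_sub_left (fun x : ℝ => x^2) (t+τ)]
    have hb1 : t + τ - (t + τ) = 0 := by ring
    have hb2 : t + τ - t = τ := by ring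
    rw [hb2, hb1, integral_pow]
    norm_num
  have c2 : ∫ s in (t-τ)..t, (k s)^2 = τ^3/3 := by
    have h' : ∫ s in (t-τ)..t, (k s)^2 = ∫ s in (t-τ)..t, ((fun x : ℝ => x^2) (s - (t-τ))) := by
      apply intervalIntegral.integral_congr
      intro s hs
      rw [uIcc_of_le (by linarith)] at hs
      have : |s - t| = t - s := by rw [abs_of_nonpos (by linarith [hs.2] : s - t ≤ 0)]; ring
      simp only [hk, this]
      ring_nf
    rw [h', intervalIntegral.integral_comp_sub_right (fun x : ℝ => x^2) (t-τ)]
    have hb1 : t - τ - (t - τ) = 0 := by ring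
    have hb2 : t - (t - τ) = τ := by ring
    rw [hb1, hb2, integral_pow]
    norm_num
  have hCsq : ∫ s in (t-τ)..(t+τ), (k s)^2 = 2*τ^3/3 := by
    rw [← intervalIntegral.integral_add_adjacent_intervals
      (μ := volume) (a := t-τ) (b := t) (c := t+τ) (f := fun s => (k s)^2)
      ((hkc.pow 2).intervalIntegrable _ _) ((hkc.pow 2).intervalIntegrable _ _), c1, c2]
    ring
  -- Cauchy–Schwarz setup
  set μ := volume.restrict (Set.Ioc (t-τ) (t+τ)) with hμ
  haveI : IsFiniteMeasure μ := by rw [hμ]; infer_instance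
  have hmem : ∀ᵐ s ∂μ, s ∈ Set.Ioc (t-τ) (t+τ) := ae_restrict_mem measurableSet_Ioc
  have hk_nonneg : 0 ≤ᵐ[μ] k := by
    filter_upwards [hmem] with s hs
    have h' : |s - t| ≤ τ := abs_le.mpr ⟨by linarith [hs.1], by linarith [hs.2]⟩
    simp only [Pi.zero_apply, hk]
    linarith
  have hF_nonneg : 0 ≤ᵐ[μ] (fun s => |F s|) :=
    Filter.Eventually.of_forall fun s => abs_nonneg _
  have hkmem : MemLp k (ENNReal.ofReal 2) μ := by
    refine (memLp_top_of_bound hkc.aestronglyMeasurable τ ?_).mono_exponent le_top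
    filter_upwards [hmem, hk_nonneg] with s hs hks
    rw [Real.norm_eq_abs, abs_of_nonneg hks]
    simp only [hk]
    have : 0 ≤ |s - t| := abs_nonneg _
    linarith
  obtain ⟨M, hM⟩ := (isCompact_Icc (a := t-τ) (b := t+τ)).exists_bound_of_continuousOn
    hFc.continuousOn
  have hFmem : MemLp (fun s => |F s|) (ENNReal.ofReal 2) μ := by
    refine (memLp_top_of_bound (hFc.abs.aestronglyMeasurable) M ?_).mono_exponent le_top
    filter_upwards [hmem] with s hs
    rw [Real.norm_eq_abs, abs_abs]
    exact le_trans (le_of_eq (Real.norm_eq_abs _).symm) (hM s (Ioc_subset_Icc_self hs))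
  have hpq : Real.HolderConjugate 2 2 :=
    (Real.holderConjugate_iff_eq_conjExponent one_lt_two).mpr (by norm_num)
  have CS := integral_mul_le_Lp_mul_Lq_of_nonneg hpq hk_nonneg hF_nonneg hkmem hFmem
  -- convert rpow integrals to the interval integrals
  have i1 : ∫ a, k a ^ (2:ℝ) ∂μ = ∫ s in (t-τ)..(t+τ), (k s)^2 := by
    rw [intervalIntegral.integral_of_le hab]
    apply MeasureTheory.integral_congr_ae
    filter_upwards with s
    rw [show (2:ℝ) = ((2:ℕ):ℝ) by norm_num, Real.rpow_natCast]
  have i2 : ∫ a, |F a| ^ (2:ℝ) ∂μ = ∫ s in (t-τ)..(t+τ), |F s|^2 := by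
    rw [intervalIntegral.integral_of_le hab]
    apply MeasureTheory.integral_congr_ae
    filter_upwards with s
    rw [show (2:ℝ) = ((2:ℕ):ℝ) by norm_num, Real.rpow_natCast]
  -- bound |D| by ∫ k |F|
  have hD : |g (t+τ) - 2 * g t + g (t-τ)| ≤ ∫ a, k a * |F a| ∂μ := by
    rw [← hrep, intervalIntegral.integral_of_le hab]
    calc |∫ s in Set.Ioc (t-τ) (t+τ), k s * F s|
        ≤ ∫ s in Set.Ioc (t-τ) (t+τ), |k s| * |F s| := by
          simpa [Real.norm_eq_abs] using
            MeasureTheory.norm_integral_le_integral_norm (μ := μ) (fun s => k s * F s)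
      _ = ∫ a, k a * |F a| ∂μ := by
          apply MeasureTheory.integral_congr_ae
          filter_upwards [hk_nonneg] with s hs
          rw [abs_of_nonneg hs]
  -- nonnegativity of integrals
  have hx : 0 ≤ ∫ a, k a ^ (2:ℝ) ∂μ := by
    apply MeasureTheory.integral_nonneg_of_ae
    filter_upwards [hk_nonneg] with s hs
    exact Real.rpow_nonneg hs _
  have hy : 0 ≤ ∫ a, |F a| ^ (2:ℝ) ∂μ := by
    apply MeasureTheory.integral_nonneg_of_ae
    filter_upwards with s
    exact Real.rpow_nonneg (abs_nonneg _) _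
  have hprod : 0 ≤ ∫ a, k a * |F a| ∂μ := by
    apply MeasureTheory.integral_nonneg_of_ae
    filter_upwards [hk_nonneg] with s hs
    exact mul_nonneg hs (abs_nonneg _)
  -- finish
  have key : |g (t + τ) - 2 * g t + g (t - τ)| ^ 2
      ≤ (∫ a, k a ^ (2:ℝ) ∂μ) * (∫ a, |F a| ^ (2:ℝ) ∂μ) := by
    calc |g (t + τ) - 2 * g t + g (t - τ)| ^ 2
        ≤ (∫ a, k a * |F a| ∂μ) ^ 2 := pow_le_pow_left₀ (abs_nonneg _) hD 2
      _ ≤ ((∫ a, k a ^ (2:ℝ) ∂μ) ^ (1/2:ℝ) * (∫ a, |F a| ^ (2:ℝ) ∂μ) ^ (1/2:ℝ)) ^ 2 :=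
          pow_le_pow_left₀ hprod CS 2
      _ = (∫ a, k a ^ (2:ℝ) ∂μ) * (∫ a, |F a| ^ (2:ℝ) ∂μ) := by
          rw [mul_pow, ← Real.rpow_natCast ((∫ a, k a ^ (2:ℝ) ∂μ) ^ (1/2:ℝ)) 2,
            ← Real.rpow_natCast ((∫ a, |F a| ^ (2:ℝ) ∂μ) ^ (1/2:ℝ)) 2,
            ← Real.rpow_mul hx, ← Real.rpow_mul hy]
          norm_num
  rw [i1, i2, hCsq] at key
  exact key
end

section
/- Let g : ℝ → ℝ be twice continuously differentiable, let t ∈ ℝ and τ > 0. Then |(3g(t + τ) + g(t − τ))/4 − g(t + τ/2)|² ≤ 2τ³ ∫_{t−τ}^{t+τ} |g″(s)|² ds. -/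
open intervalIntegral MeasureTheory

/-- Cauchy–Schwarz for interval integrals. -/
lemma cs_lemma (f : ℝ → ℝ) (hf : Continuous f) (a b : ℝ) (hab : a ≤ b) :
    (∫ s in a..b, f s) ^ 2 ≤ (b - a) * ∫ s in a..b, f s ^ 2 := by
  rcases eq_or_lt_of_le hab with rfl | hlt
  · simp
  set I := ∫ s in a..b, f s with hI
  set J := ∫ s in a..b, f s ^ 2 with hJ
  set d := b - a with hd
  have hd0 : 0 < d := by simp [hd]; linarith
  set L := I / d with hL
  have hint : IntervalIntegrable f volume a b := hf.intervalIntegrable a b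
  have hint2 : IntervalIntegrable (fun s => f s ^ 2) volume a b :=
    (hf.pow 2).intervalIntegrable a b
  have key : 0 ≤ ∫ s in a..b, (f s - L) ^ 2 :=
    intervalIntegral.integral_nonneg hab (fun x _ => sq_nonneg _)
  have expand : (∫ s in a..b, (f s - L) ^ 2) = J - 2 * L * I + L ^ 2 * d := by
    have : ∀ s : ℝ, (f s - L) ^ 2 = f s ^ 2 - (2 * L) * f s + L ^ 2 := by
      intro s; ring
    simp_rw [this]
    rw [intervalIntegral.integral_add (hint2.sub (hint.const_mul _))
        intervalIntegrable_const,
      intervalIntegral.integral_sub hint2 (hint.const_mul _),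
      intervalIntegral.integral_const_mul, intervalIntegral.integral_const]
    simp [hd, smul_eq_mul]; ring
  rw [expand] at key
  have hLd : L * d = I := by rw [hL, div_mul_cancel₀ I hd0.ne']
  nlinarith [sq_nonneg (L * d - I), sq_nonneg L]

/-- First-order Taylor with integral remainder. -/
lemma taylor1 (g : ℝ → ℝ) (hg : ContDiff ℝ 2 g) (a b : ℝ) :
    g b = g a + (b - a) * deriv g a + ∫ s in a..b, (b - s) * deriv (deriv g) s := by
  have h2 : ContDiff ℝ (1 + 1) g := by exact_mod_cast hg
  have hg1 : ContDiff ℝ 1 (deriv g) := (contDiff_succ_iff_deriv.mp h2).2.2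
  have hdg : Differentiable ℝ g := (contDiff_succ_iff_deriv.mp h2).1
  have hdg' : Differentiable ℝ (deriv g) := hg1.differentiable one_ne_zero
  have hcont' : Continuous (deriv g) := hdg'.continuous
  have hcont'' : Continuous (deriv (deriv g)) := (contDiff_one_iff_deriv.mp hg1).2
  have ibp := intervalIntegral.integral_mul_deriv_eq_deriv_mul
    (u := fun s => b - s) (u' := fun _ => (-1 : ℝ)) (v := deriv g)
    (v' := deriv (deriv g)) (a := a) (b := b)
    (fun x _ => by simpa using (hasDerivAt_id x).const_sub b)
    (fun x _ => (hdg' x).hasDerivAt)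
    (intervalIntegrable_const)
    (hcont''.intervalIntegrable a b)
  have ftc : (∫ s in a..b, deriv g s) = g b - g a :=
    intervalIntegral.integral_deriv_eq_sub (fun x _ => hdg x) (hcont'.intervalIntegrable a b)
  have : (∫ s in a..b, (-1 : ℝ) * deriv g s) = -(g b - g a) := by
    simp_rw [neg_one_mul]
    rw [intervalIntegral.integral_neg, ftc]
  rw [this] at ibp
  rw [ibp]; ring

theorem stmt_9 (g : ℝ → ℝ) (hg : ContDiff ℝ 2 g) (t τ : ℝ) (hτ : 0 < τ) :
    |(3 * g (t + τ) + g (t - τ)) / 4 - g (t + τ / 2)| ^ 2 ≤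
      2 * τ ^ 3 * ∫ s in (t - τ)..(t + τ), |deriv (deriv g) s| ^ 2 := by
  set G := deriv (deriv g) with hG
  have h2 : ContDiff ℝ (1 + 1) g := by exact_mod_cast hg
  have hg1 : ContDiff ℝ 1 (deriv g) := (contDiff_succ_iff_deriv.mp h2).2.2
  have hcG : Continuous G := (contDiff_one_iff_deriv.mp hg1).2
  set A := t - τ with hA
  set B := t + τ with hB
  set c := t + τ / 2 with hc
  have hAc : A ≤ c := by simp [hA, hc]; linarith
  have hcB : c ≤ B := by simp [hB, hc]; linarith
  set R1 := ∫ s in c..B, (B - s) * G s with hR1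
  set R2 := ∫ s in c..A, (A - s) * G s with hR2
  have e1 := taylor1 g hg c B
  have e2 := taylor1 g hg c A
  have hE : (3 * g B + g A) / 4 - g c = (3 * R1 + R2) / 4 := by
    rw [e1, e2]; simp only [hB, hA, hc]; ring
  -- bound R1
  have hint1 : IntervalIntegrable (fun s => |(B - s) * G s|) volume c B :=
    ((continuous_const.sub continuous_id).mul hcG).abs.intervalIntegrable c B
  have hintG1 : IntervalIntegrable (fun s => τ / 2 * |G s|) volume c B :=
    (continuous_const.mul hcG.abs).intervalIntegrable c B
  have b1 : |R1| ≤ τ / 2 * ∫ s in c..B, |G s| := by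
    calc |R1| ≤ ∫ s in c..B, |(B - s) * G s| :=
          intervalIntegral.abs_integral_le_integral_abs hcB
      _ ≤ ∫ s in c..B, τ / 2 * |G s| := by
          apply intervalIntegral.integral_mono_on hcB hint1 hintG1
          intro x hx
          rw [abs_mul]
          apply mul_le_mul_of_nonneg_right _ (abs_nonneg _)
          rw [abs_of_nonneg (by linarith [hx.2] : (0:ℝ) ≤ B - x)]
          have := hx.1
          simp only [hB, hc] at *
          linarith
      _ = τ / 2 * ∫ s in c..B, |G s| := intervalIntegral.integral_const_mul _ _
  -- bound R2
  have hint2 : IntervalIntegrable (fun s => |(A - s) * G s|) volume A c :=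
    ((continuous_const.sub continuous_id).mul hcG).abs.intervalIntegrable A c
  have hintG2 : IntervalIntegrable (fun s => 3 * τ / 2 * |G s|) volume A c :=
    (continuous_const.mul hcG.abs).intervalIntegrable A c
  have b2 : |R2| ≤ 3 * τ / 2 * ∫ s in A..c, |G s| := by
    have hsym : R2 = -∫ s in A..c, (A - s) * G s := by
      rw [hR2, intervalIntegral.integral_symm]
    rw [hsym, abs_neg]
    calc |∫ s in A..c, (A - s) * G s| ≤ ∫ s in A..c, |(A - s) * G s| :=
          intervalIntegral.abs_integral_le_integral_abs hAc
      _ ≤ ∫ s in A..c, 3 * τ / 2 * |G s| := by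
          apply intervalIntegral.integral_mono_on hAc hint2 hintG2
          intro x hx
          rw [abs_mul]
          apply mul_le_mul_of_nonneg_right _ (abs_nonneg _)
          rw [abs_sub_comm, abs_of_nonneg (by linarith [hx.1] : (0:ℝ) ≤ x - A)]
          have := hx.2
          simp only [hA, hc] at *
          linarith
      _ = 3 * τ / 2 * ∫ s in A..c, |G s| := intervalIntegral.integral_const_mul _ _
  set X := ∫ s in c..B, |G s| with hX
  set Y := ∫ s in A..c, |G s| with hY
  have hXY : Y + X = ∫ s in A..B, |G s| :=
    intervalIntegral.integral_add_adjacent_intervals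
      (hcG.abs.intervalIntegrable A c) (hcG.abs.intervalIntegrable c B)
  have hXn : 0 ≤ X := intervalIntegral.integral_nonneg hcB (fun x _ => abs_nonneg _)
  have hYn : 0 ≤ Y := intervalIntegral.integral_nonneg hAc (fun x _ => abs_nonneg _)
  have hEb : |(3 * g B + g A) / 4 - g c| ≤ 3 * τ / 8 * (X + Y) := by
    rw [hE]
    have h3 : |3 * R1 + R2| ≤ 3 * |R1| + |R2| :=
      (abs_add_le _ _).trans (by rw [abs_mul]; norm_num)
    rw [abs_div, show |(4:ℝ)| = 4 by norm_num]
    nlinarith [h3, b1, b2]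
  have hAB : A ≤ B := le_trans hAc hcB
  have cs := cs_lemma (fun s => |G s|) hcG.abs A B hAB
  have hBA : B - A = 2 * τ := by simp [hA, hB]; ring
  set K := ∫ s in A..B, |G s| ^ 2 with hK
  have hKn : 0 ≤ K := intervalIntegral.integral_nonneg hAB (fun x _ => sq_nonneg _)
  rw [hBA, ← hXY] at cs
  have habsn : (0:ℝ) ≤ |(3 * g B + g A) / 4 - g c| := abs_nonneg _
  have step : |(3 * g B + g A) / 4 - g c| ^ 2 ≤ (3 * τ / 8 * (X + Y)) ^ 2 :=
    pow_le_pow_left₀ habsn hEb 2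
  have : (3 * τ / 8 * (X + Y)) ^ 2 ≤ 2 * τ ^ 3 * K := by
    have h1 : (Y + X) ^ 2 ≤ 2 * τ * K := cs
    nlinarith [sq_nonneg (X + Y), hτ.le, hKn, mul_nonneg (mul_nonneg hτ.le hτ.le) hKn]
  exact step.trans this
end

section
/- Let g : ℝ → ℝ be twice continuously differentiable, let t ∈ ℝ and τ > 0. Then |(3/2)g(t) − (1/2)g(t − τ) − g(t + τ/2)|² ≤ 4τ³ ∫_{t−τ}^{t+τ} |g″(s)|² ds. -/
theorem cs_interval (h : ℝ → ℝ) (hc : Continuous h) (a b : ℝ) (hab : a ≤ b) :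
    (∫ s in a..b, |h s|) ^ 2 ≤ (b - a) * ∫ s in a..b, (h s) ^ 2 := by
  set I := ∫ s in a..b, |h s| with hI
  have hint1 : IntervalIntegrable (fun s => |h s|) MeasureTheory.volume a b :=
    (hc.abs).intervalIntegrable a b
  have hint2 : IntervalIntegrable (fun s => (h s)^2) MeasureTheory.volume a b :=
    (hc.pow 2).intervalIntegrable a b
  have key : 0 ≤ ∫ s in a..b, ((b - a) * |h s| - I) ^ 2 := by
    apply intervalIntegral.integral_nonneg hab
    intro x _; positivity
  have e1 : (fun s => ((b - a) * |h s| - I) ^ 2)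
      = fun s => (b - a)^2 * (h s)^2 - 2 * (b - a) * I * |h s| + I^2 := by
    funext s; rw [sub_sq, mul_pow, sq_abs]; ring
  have expand : ∫ s in a..b, ((b - a) * |h s| - I) ^ 2
      = (b - a)^2 * (∫ s in a..b, (h s)^2) - 2 * (b - a) * I * I + (b - a) * I^2 := by
    rw [show (∫ s in a..b, ((b - a) * |h s| - I) ^ 2)
        = ∫ s in a..b, ((b - a)^2 * (h s)^2 - 2 * (b - a) * I * |h s| + I^2) from by rw [e1]]
    rw [intervalIntegral.integral_add ((hint2.const_mul _).sub (hint1.const_mul _))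
        intervalIntegrable_const,
      intervalIntegral.integral_sub (hint2.const_mul _) (hint1.const_mul _),
      intervalIntegral.integral_const_mul, intervalIntegral.integral_const_mul,
      intervalIntegral.integral_const, smul_eq_mul]
  rw [expand] at key
  rcases eq_or_lt_of_le hab with rfl | hlt
  · simp [hI]
  · nlinarith [key, sub_pos.2 hlt]

theorem taylor_int (g : ℝ → ℝ) (hg : ContDiff ℝ 2 g) (a b : ℝ) :
    ∫ s in a..b, (b - s) * deriv (deriv g) s
      = g b - g a - (b - a) * deriv g a := by
  have hg2 : ContDiff ℝ (1 + 1) g := by norm_num; exact hg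
  have h1 : ContDiff ℝ 1 (deriv g) := (contDiff_succ_iff_deriv.mp hg2).2.2
  have hd1 : Differentiable ℝ (deriv g) := h1.differentiable one_ne_zero
  have hfc : Continuous (deriv (deriv g)) := (contDiff_one_iff_deriv.mp h1).2
  have hgc : Continuous (deriv g) := hd1.continuous
  have ibp := intervalIntegral.integral_mul_deriv_eq_deriv_mul
    (u := fun s => b - s) (u' := fun _ => (-1 : ℝ)) (v := deriv g)
    (v' := deriv (deriv g)) (a := a) (b := b)
    (fun x _ => (hasDerivAt_id x).const_sub b)
    (fun x _ => (hd1 x).hasDerivAt)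
    intervalIntegrable_const (hfc.intervalIntegrable a b)
  have hftc : ∫ x in a..b, deriv g x = g b - g a :=
    intervalIntegral.integral_deriv_eq_sub
      (fun x _ => ((contDiff_succ_iff_deriv.mp hg2).1 x))
      (hgc.intervalIntegrable a b)
  have : ∫ x in a..b, (-1 : ℝ) * deriv g x = -(g b - g a) := by
    rw [intervalIntegral.integral_const_mul, hftc]; ring
  rw [ibp, this]; ring

theorem stmt_10 (g : ℝ → ℝ) (hg : ContDiff ℝ 2 g) (t τ : ℝ) (hτ : 0 < τ) :
    |(3 / 2) * g t - (1 / 2) * g (t - τ) - g (t + τ / 2)| ^ 2 ≤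
      4 * τ ^ 3 * ∫ s in (t - τ)..(t + τ), |deriv (deriv g) s| ^ 2 := by
  set f := deriv (deriv g) with hf
  have hg2 : ContDiff ℝ (1 + 1) g := by norm_num; exact hg
  have h1 : ContDiff ℝ 1 (deriv g) := (contDiff_succ_iff_deriv.mp hg2).2.2
  have hfc : Continuous f := (contDiff_one_iff_deriv.mp h1).2
  set m := t + τ / 2 with hm
  clear_value m
  have htm : t ≤ m := by rw [hm]; linarith
  have htτm : t - τ ≤ m := by rw [hm]; linarith
  have hmtτ : m ≤ t + τ := by rw [hm]; linarith
  set I1 := ∫ s in m..t, (t - s) * f s with hI1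
  set I2 := ∫ s in m..(t - τ), ((t - τ) - s) * f s with hI2
  have R1 := taylor_int g hg m t
  have R2 := taylor_int g hg m (t - τ)
  have hE : (3 / 2) * g t - (1 / 2) * g (t - τ) - g m
      = 3 / 2 * I1 - 1 / 2 * I2 := by
    simp only [← hf] at R1 R2
    rw [hI1, hI2]
    linear_combination (-(3 / 2) : ℝ) * R1 + (1 / 2 : ℝ) * R2 - deriv g m * hm
  set J := ∫ s in (t - τ)..m, |f s| with hJ
  have hJnn : 0 ≤ J := intervalIntegral.integral_nonneg htτm (fun x _ => abs_nonneg _)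
  have habsint : IntervalIntegrable (fun s => |f s|) MeasureTheory.volume (t - τ) m :=
    (hfc.abs).intervalIntegrable _ _
  -- bound I1
  have hb1 : |I1| ≤ (τ / 2) * J := by
    have e : I1 = -∫ s in t..m, (t - s) * f s := by
      rw [hI1, intervalIntegral.integral_symm]
    rw [e, abs_neg]
    calc |∫ s in t..m, (t - s) * f s| ≤ ∫ s in t..m, |(t - s) * f s| :=
          intervalIntegral.abs_integral_le_integral_abs htm
      _ ≤ ∫ s in t..m, (τ / 2) * |f s| := by
          apply intervalIntegral.integral_mono_on htm
            ((((continuous_const.sub continuous_id).mul hfc).abs).intervalIntegrable _ _)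
            (((hfc.abs).intervalIntegrable _ _).const_mul _)
          intro x hx
          simp only [Pi.mul_apply, Pi.sub_apply, id_eq]
          rw [abs_mul]
          apply mul_le_mul_of_nonneg_right _ (abs_nonneg _)
          rw [abs_sub_comm, abs_of_nonneg (by linarith [hx.1] : (0:ℝ) ≤ x - t)]
          have := hx.2; rw [hm] at this; linarith
      _ = (τ / 2) * ∫ s in t..m, |f s| := intervalIntegral.integral_const_mul _ _
      _ ≤ (τ / 2) * J := by
          apply mul_le_mul_of_nonneg_left _ (by linarith)
          exact intervalIntegral.integral_mono_interval (by linarith) htm le_rfl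
            (Filter.Eventually.of_forall fun x => abs_nonneg _) habsint
  -- bound I2
  have hb2 : |I2| ≤ (3 * τ / 2) * J := by
    have e : I2 = -∫ s in (t - τ)..m, ((t - τ) - s) * f s := by
      rw [hI2, intervalIntegral.integral_symm]
    rw [e, abs_neg]
    calc |∫ s in (t - τ)..m, ((t - τ) - s) * f s|
        ≤ ∫ s in (t - τ)..m, |((t - τ) - s) * f s| :=
          intervalIntegral.abs_integral_le_integral_abs htτm
      _ ≤ ∫ s in (t - τ)..m, (3 * τ / 2) * |f s| := by
          apply intervalIntegral.integral_mono_on htτm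
            ((((continuous_const.sub continuous_id).mul hfc).abs).intervalIntegrable _ _)
            (habsint.const_mul _)
          intro x hx
          simp only [Pi.mul_apply, Pi.sub_apply, id_eq]
          rw [abs_mul]
          apply mul_le_mul_of_nonneg_right _ (abs_nonneg _)
          rw [abs_sub_comm, abs_of_nonneg (by linarith [hx.1] : (0:ℝ) ≤ x - (t - τ))]
          have := hx.2; rw [hm] at this; linarith
      _ = (3 * τ / 2) * J := intervalIntegral.integral_const_mul _ _
  -- Cauchy-Schwarz
  have hcs : J ^ 2 ≤ (3 * τ / 2) * ∫ s in (t - τ)..m, (f s) ^ 2 := by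
    have := cs_interval f hfc (t - τ) m htτm
    rw [← hJ] at this
    have he : m - (t - τ) = 3 * τ / 2 := by rw [hm]; ring
    rwa [he] at this
  -- extend to the big interval
  set K := ∫ s in (t - τ)..m, (f s) ^ 2 with hK
  set X := ∫ s in (t - τ)..(t + τ), |f s| ^ 2 with hX
  have hXK : K ≤ X := by
    have e : X = ∫ s in (t - τ)..(t + τ), (f s) ^ 2 := by
      rw [hX]; congr 1; funext s; rw [sq_abs]
    rw [e, hK]
    exact intervalIntegral.integral_mono_interval le_rfl htτm hmtτ
      (Filter.Eventually.of_forall fun x => sq_nonneg _)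
      ((hfc.pow 2).intervalIntegrable _ _)
  have hKnn : 0 ≤ K := intervalIntegral.integral_nonneg htτm (fun x _ => sq_nonneg _)
  -- assemble
  have hEabs : |(3 / 2) * g t - (1 / 2) * g (t - τ) - g m| ≤ (3 * τ / 2) * J := by
    rw [hE]
    calc |3 / 2 * I1 - 1 / 2 * I2| ≤ |3 / 2 * I1| + |1 / 2 * I2| := abs_sub _ _
      _ = 3 / 2 * |I1| + 1 / 2 * |I2| := by
          rw [abs_mul, abs_mul, abs_of_pos (by norm_num : (0:ℝ) < 3/2),
            abs_of_pos (by norm_num : (0:ℝ) < 1/2)]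
      _ ≤ 3 / 2 * ((τ / 2) * J) + 1 / 2 * ((3 * τ / 2) * J) := by
          gcongr <;> norm_num
      _ = (3 * τ / 2) * J := by ring
  have hsq : |(3 / 2) * g t - (1 / 2) * g (t - τ) - g m| ^ 2 ≤ ((3 * τ / 2) * J) ^ 2 := by
    apply pow_le_pow_left₀ (abs_nonneg _) hEabs
  calc |(3 / 2) * g t - (1 / 2) * g (t - τ) - g m| ^ 2
      ≤ ((3 * τ / 2) * J) ^ 2 := hsq
    _ = (9 / 4) * τ ^ 2 * J ^ 2 := by ring
    _ ≤ (9 / 4) * τ ^ 2 * ((3 * τ / 2) * K) := by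
        apply mul_le_mul_of_nonneg_left hcs (by positivity)
    _ = (27 / 8) * τ ^ 3 * K := by ring
    _ ≤ 4 * τ ^ 3 * X := by nlinarith [pow_pos hτ 3]
end
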